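/- For every positive integer n, the real interval [(n+1)/(√(2n)+1), √(n/2) + 1/2) contains at most one integer. -/
import Mathlib

/-- The interval [(n+1)/(√(2n)+1), √(n/2)+1/2) contains at most one integer. -/
theorem stmt_11 (n : ℤ) (hn : 0 < n) (a b : ℤ)
    (ha1 : ((n : ℝ) + 1) / (Real.sqrt (2 * (n : ℝ)) + 1) ≤ (a : ℝ))
    (ha2 : (a : ℝ) < Real.sqrt ((n : ℝ) / 2) + 1 / 2)
    (hb1 : ((n : ℝ) + 1) / (Real.sqrt (2 * (n : ℝ)) + 1) ≤ (b : ℝ))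
    (hb2 : (b : ℝ) < Real.sqrt ((n : ℝ) / 2) + 1 / 2) :
    a = b := by
  have hn' : (0:ℝ) < (n:ℝ) := by exact_mod_cast hn
  set s := Real.sqrt (2 * (n:ℝ)) with hsdef
  have hs : 0 ≤ s := Real.sqrt_nonneg _
  have hs2 : s ^ 2 = 2 * n := Real.sq_sqrt (by positivity)
  have hhalf : Real.sqrt ((n:ℝ) / 2) = s / 2 := by
    have h1 : ((n:ℝ) / 2) = (s / 2) ^ 2 := by nlinarith
    rw [h1, Real.sqrt_sq (by positivity)]
  have hU : Real.sqrt ((n:ℝ) / 2) + 1 / 2 = (s + 1) / 2 := by rw [hhalf]; ring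
  have hL : (s + 1) / 2 - 1 ≤ ((n:ℝ) + 1) / (s + 1) := by
    rw [le_div_iff₀ (by positivity)]
    nlinarith
  rw [hU] at ha2 hb2
  have h1 : (a : ℝ) < b + 1 := by linarith
  have h2 : (b : ℝ) < a + 1 := by linarith
  have h1' : a < b + 1 := by exact_mod_cast h1
  have h2' : b < a + 1 := by exact_mod_cast h2
  omega
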